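/- Let G be a Young function, r > 0, and let (u_n) be a sequence of radially symmetric measurable functions on ℝ^N (N ≥ 2) with ∫_{ℝ^N} G(|u_n|) dx ≤ C for all n. Then sup over n of ∫_{B_r(y)} G(|u_n|) dx ≤ C/γ(y), where γ(y) is the maximal number of pairwise disjoint balls B_r(y_i) with centers y_i on the sphere {|x| = |y|}; in particular this supremum tends to 0 as |y| → ∞. -/

import Mathlib

open Set Filter Metric MeasureTheory ENNReal

/-- A Young function: continuous, convex, strictly increasing on `[0,∞)`,
vanishing at `0`. -/
def IsYoung (G : ℝ → ℝ) : Prop :=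
  ContinuousOn G (Set.Ici 0) ∧ ConvexOn ℝ (Set.Ici 0) G ∧
    StrictMonoOn G (Set.Ici 0) ∧ G 0 = 0

/-- `gam N r y` is the maximal number `j` of points on the sphere of radius `‖y‖`
whose `r`-balls are pairwise disjoint. -/
noncomputable def gam (N : ℕ) (r : ℝ) (y : EuclideanSpace ℝ (Fin N)) : ℕ :=
  sSup {j : ℕ | ∃ c : Fin j → EuclideanSpace ℝ (Fin N),
    (∀ i, ‖c i‖ = ‖y‖) ∧
    Pairwise fun i k => Disjoint (Metric.ball (c i) r) (Metric.ball (c k) r)}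


open scoped RealInnerProductSpace

variable {N : ℕ}

/-- Rotation invariance: integrals over balls with centers of equal norm agree, for radial f. -/
lemma ball_lintegral_congr (f : EuclideanSpace ℝ (Fin N) → ℝ≥0∞)
    (hradf : ∀ x z : EuclideanSpace ℝ (Fin N), ‖x‖ = ‖z‖ → f x = f z)
    {y c : EuclideanSpace ℝ (Fin N)} (h : ‖c‖ = ‖y‖) (r : ℝ) :
    ∫⁻ x in Metric.ball c r, f x = ∫⁻ x in Metric.ball y r, f x := by
  set T : EuclideanSpace ℝ (Fin N) ≃ₗᵢ[ℝ] EuclideanSpace ℝ (Fin N) :=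
    Submodule.reflection (ℝ ∙ (y - c))ᗮ with hT
  have hTy : T y = c := Submodule.reflection_sub h.symm
  have hmp : MeasurePreserving T := T.measurePreserving
  have hpre : (T : EuclideanSpace ℝ (Fin N) → EuclideanSpace ℝ (Fin N)) ⁻¹' Metric.ball c r
      = Metric.ball y r := by
    rw [← hTy]
    ext x
    simp [Metric.mem_ball, dist_eq_norm, ← map_sub T x y, T.norm_map]
  have := hmp.setLIntegral_comp_preimage_emb T.toHomeomorph.measurableEmbedding f
    (Metric.ball c r)
  rw [hpre] at this
  rw [← this]
  refine setLIntegral_congr_fun measurableSet_ball ?_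
  intro x _
  exact hradf _ _ (T.norm_map x)

/-- Packing bound: `j` disjoint balls with centers of norm `‖y‖` each integrate
the same as the ball at `y`, so `j` copies fit under the total integral. -/
lemma disjoint_balls_bound (f : EuclideanSpace ℝ (Fin N) → ℝ≥0∞)
    (hradf : ∀ x z : EuclideanSpace ℝ (Fin N), ‖x‖ = ‖z‖ → f x = f z)
    {y : EuclideanSpace ℝ (Fin N)} {r : ℝ} {j : ℕ} {c : Fin j → EuclideanSpace ℝ (Fin N)}
    (hc : ∀ i, ‖c i‖ = ‖y‖)
    (hd : Pairwise fun i k => Disjoint (Metric.ball (c i) r) (Metric.ball (c k) r)) :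
    (j : ℝ≥0∞) * ∫⁻ x in Metric.ball y r, f x ≤ ∫⁻ x, f x := by
  have h1 : (j : ℝ≥0∞) * ∫⁻ x in Metric.ball y r, f x
      = ∑ i : Fin j, ∫⁻ x in Metric.ball (c i) r, f x := by
    rw [Finset.sum_congr rfl fun i _ => ball_lintegral_congr f hradf (hc i) r]
    simp [Finset.sum_const, nsmul_eq_mul]
  rw [h1]
  have h2 : ∑ i : Fin j, ∫⁻ x in Metric.ball (c i) r, f x
      = ∫⁻ x in ⋃ i, Metric.ball (c i) r, f x := by
    rw [lintegral_iUnion (fun i => measurableSet_ball) hd f, tsum_fintype]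
  rw [h2]
  exact setLIntegral_le_lintegral _ f

lemma norm_single_comb {i0 i1 : Fin N} (h : i0 ≠ i1) (a b : ℝ) :
    ‖a • EuclideanSpace.single i0 (1:ℝ) + b • EuclideanSpace.single i1 (1:ℝ)‖
      = Real.sqrt (a ^ 2 + b ^ 2) := by
  have hi : (inner ℝ (EuclideanSpace.single i0 (1:ℝ)) (EuclideanSpace.single i1 (1:ℝ)) : ℝ) = 0 := by
    rw [EuclideanSpace.inner_single_left]
    simp [EuclideanSpace.single_apply, h]
  have hsq : ‖a • EuclideanSpace.single i0 (1:ℝ) + b • EuclideanSpace.single i1 (1:ℝ)‖ ^ 2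
      = a ^ 2 + b ^ 2 := by
    rw [norm_add_sq_real, real_inner_smul_left, real_inner_smul_right, hi, norm_smul, norm_smul,
      EuclideanSpace.norm_single, EuclideanSpace.norm_single]
    simp [mul_pow, sq_abs]
  rw [← hsq, Real.sqrt_sq (norm_nonneg _)]

lemma inner_single_comb {i0 i1 : Fin N} (h : i0 ≠ i1) (a b : ℝ) :
    (inner ℝ (a • EuclideanSpace.single i0 (1:ℝ) + b • EuclideanSpace.single i1 (1:ℝ))
      (EuclideanSpace.single i1 (1:ℝ)) : ℝ) = b := by
  rw [inner_add_left, real_inner_smul_left, real_inner_smul_left,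
    EuclideanSpace.inner_single_left, EuclideanSpace.inner_single_left]
  simp [EuclideanSpace.single_apply, h]

lemma exists_separated (hN : 2 ≤ N) {r : ℝ} (hr : 0 < r) (m : ℕ) {R : ℝ}
    (hR : 2 * r * m ≤ R) :
    ∃ c : Fin m → EuclideanSpace ℝ (Fin N), (∀ i, ‖c i‖ = R) ∧
      Pairwise fun i k => Disjoint (Metric.ball (c i) r) (Metric.ball (c k) r) := by
  rcases Nat.eq_zero_or_pos m with hm | hm
  · subst hm
    exact ⟨Fin.elim0, fun i => i.elim0, fun i => i.elim0⟩
  set i0 : Fin N := ⟨0, by omega⟩ with hi0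
  set i1 : Fin N := ⟨1, by omega⟩ with hi1
  have hi01 : i0 ≠ i1 := by simp [hi0, hi1, Fin.ext_iff]
  set b : Fin m → ℝ := fun k => 2 * r * k with hb
  have hbR : ∀ k : Fin m, 0 ≤ b k ∧ b k ≤ R := by
    intro k
    refine ⟨by positivity, ?_⟩
    calc b k = 2 * r * k := rfl
      _ ≤ 2 * r * m := by
          have : (k : ℝ) ≤ m := by exact_mod_cast (k.2.le)
          nlinarith
      _ ≤ R := hR
  set a : Fin m → ℝ := fun k => Real.sqrt (R ^ 2 - b k ^ 2) with ha
  set c : Fin m → EuclideanSpace ℝ (Fin N) :=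
    fun k => a k • EuclideanSpace.single i0 (1:ℝ) + b k • EuclideanSpace.single i1 (1:ℝ)
    with hcdef
  have hRnn : 0 ≤ R := le_trans (by positivity) hR
  have hsq : ∀ k, a k ^ 2 = R ^ 2 - b k ^ 2 := by
    intro k
    apply Real.sq_sqrt
    nlinarith [(hbR k).1, (hbR k).2]
  refine ⟨c, ?_, ?_⟩
  · intro k
    rw [hcdef]
    rw [norm_single_comb hi01, hsq k,
      show R ^ 2 - b k ^ 2 + b k ^ 2 = R ^ 2 by ring, Real.sqrt_sq hRnn]
  · intro i k hik
    apply Metric.ball_disjoint_ball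
    have h1 : |b i - b k| ≤ dist (c i) (c k) := by
      have h := abs_real_inner_le_norm (c i - c k) (EuclideanSpace.single i1 (1:ℝ))
      rw [EuclideanSpace.norm_single, norm_one, mul_one, inner_sub_left] at h
      rw [hcdef] at h
      simp only [inner_single_comb hi01] at h
      rwa [dist_eq_norm]
    have h2 : 2 * r ≤ |b i - b k| := by
      have hik' : ((i : ℤ) : ℝ) ≠ ((k : ℤ) : ℝ) := by
        intro h
        exact hik (Fin.ext (by exact_mod_cast h))
      have hone : (1 : ℝ) ≤ |(i : ℝ) - (k : ℝ)| := by
        have h0 : ((i:ℤ) - (k:ℤ)) ≠ 0 := by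
          intro h
          apply hik'
          have : (i:ℤ) = (k:ℤ) := by omega
          exact_mod_cast this
        have := Int.one_le_abs h0
        calc (1:ℝ) ≤ (|(i:ℤ) - (k:ℤ)| : ℤ) := by exact_mod_cast this
          _ = |(i:ℝ) - (k:ℝ)| := by push_cast; ring_nf
      calc 2 * r = 2 * r * 1 := by ring
        _ ≤ 2 * r * |(i:ℝ) - (k:ℝ)| := by nlinarith
        _ = |2 * r * ((i:ℝ) - (k:ℝ))| := by
            rw [abs_mul, abs_of_pos (show (0:ℝ) < 2 * r by linarith)]
        _ = |b i - b k| := by rw [hb]; ring_nf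
    linarith


theorem stmt_11 {N : ℕ} (hN : 2 ≤ N) (G : ℝ → ℝ) (hGY : IsYoung G)
    (r : ℝ) (hr : 0 < r) (C : ℝ) (hC : 0 < C)
    (u : ℕ → EuclideanSpace ℝ (Fin N) → ℝ)
    (hmeas : ∀ n, Measurable (u n))
    (hrad : ∀ n, ∀ x y : EuclideanSpace ℝ (Fin N), ‖x‖ = ‖y‖ → u n x = u n y)
    (hbdd : ∀ n, (∫⁻ x, ENNReal.ofReal (G |u n x|)) ≤ ENNReal.ofReal C) :
    (∀ y : EuclideanSpace ℝ (Fin N), r < ‖y‖ →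
      (⨆ n, ∫⁻ x in Metric.ball y r, ENNReal.ofReal (G |u n x|)) ≤
        ENNReal.ofReal C / (gam N r y : ℝ≥0∞)) ∧
    Filter.Tendsto
      (fun y : EuclideanSpace ℝ (Fin N) =>
        ⨆ n, ∫⁻ x in Metric.ball y r, ENNReal.ofReal (G |u n x|))
      (Filter.comap (fun y => ‖y‖) Filter.atTop) (nhds 0) := by
  have key : ∀ (n : ℕ) {j : ℕ} (c : Fin j → EuclideanSpace ℝ (Fin N))
      (y : EuclideanSpace ℝ (Fin N)),
      (∀ i, ‖c i‖ = ‖y‖) →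
      (Pairwise fun i k => Disjoint (Metric.ball (c i) r) (Metric.ball (c k) r)) →
      (j : ℝ≥0∞) * ∫⁻ x in Metric.ball y r, ENNReal.ofReal (G |u n x|)
        ≤ ENNReal.ofReal C := by
    intro n j c y hc hd
    refine le_trans (disjoint_balls_bound _ ?_ hc hd) (hbdd n)
    intro x z hxz
    rw [hrad n x z hxz]
  have hC0 : ENNReal.ofReal C ≠ 0 := (ENNReal.ofReal_pos.mpr hC).ne'
  constructor
  · intro y _
    by_cases hS : BddAbove {j : ℕ | ∃ c : Fin j → EuclideanSpace ℝ (Fin N),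
        (∀ i, ‖c i‖ = ‖y‖) ∧
        Pairwise fun i k => Disjoint (Metric.ball (c i) r) (Metric.ball (c k) r)}
    · have h0 : 0 ∈ {j : ℕ | ∃ c : Fin j → EuclideanSpace ℝ (Fin N),
          (∀ i, ‖c i‖ = ‖y‖) ∧
          Pairwise fun i k => Disjoint (Metric.ball (c i) r) (Metric.ball (c k) r)} :=
        ⟨Fin.elim0, fun i => i.elim0, fun i => i.elim0⟩
      have hmem : gam N r y ∈ {j : ℕ | ∃ c : Fin j → EuclideanSpace ℝ (Fin N),
          (∀ i, ‖c i‖ = ‖y‖) ∧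
          Pairwise fun i k => Disjoint (Metric.ball (c i) r) (Metric.ball (c k) r)} :=
        Nat.sSup_mem ⟨0, h0⟩ hS
      rcases Nat.eq_zero_or_pos (gam N r y) with hg | hg
      · rw [hg, Nat.cast_zero, ENNReal.div_zero hC0]
        exact le_top
      · obtain ⟨c, hc, hd⟩ := hmem
        refine iSup_le fun n => ?_
        rw [ENNReal.le_div_iff_mul_le (Or.inl (by exact_mod_cast hg.ne'))
          (Or.inl (ENNReal.natCast_ne_top _)), mul_comm]
        exact key n c y hc hd
    · have hg : gam N r y = 0 := by
        rw [gam, csSup_of_not_bddAbove hS, csSup_empty]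
        rfl
      rw [hg, Nat.cast_zero, ENNReal.div_zero hC0]
      exact le_top
  · rw [ENNReal.tendsto_nhds_zero]
    intro ε hε
    obtain ⟨m, hm0, hmε⟩ : ∃ m : ℕ, m ≠ 0 ∧ ENNReal.ofReal C / m ≤ ε := by
      by_cases hεt : ε = ⊤
      · exact ⟨1, one_ne_zero, by simp [hεt]⟩
      · obtain ⟨n, hn⟩ :=
          ENNReal.exists_nat_gt (ENNReal.div_lt_top ENNReal.ofReal_ne_top hε.ne').ne
        have hn' : ENNReal.ofReal C < n * ε := by
          rw [← ENNReal.div_lt_iff (Or.inl hε.ne') (Or.inl hεt)]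
          exact hn
        refine ⟨n + 1, Nat.succ_ne_zero n, ?_⟩
        rw [ENNReal.div_le_iff_le_mul
          (Or.inl (by exact_mod_cast Nat.succ_ne_zero n)) (Or.inr hε.ne')]
        rw [mul_comm]
        refine le_trans hn'.le (mul_le_mul_left ?_ ε)
        exact_mod_cast Nat.le_succ n
    have hev : ∀ᶠ y : EuclideanSpace ℝ (Fin N) in Filter.comap (fun y => ‖y‖) Filter.atTop,
        2 * r * m ≤ ‖y‖ := tendsto_comap.eventually (eventually_ge_atTop _)
    filter_upwards [hev] with y hy
    obtain ⟨c, hc, hd⟩ := exists_separated hN hr m hy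
    refine le_trans (iSup_le fun n => ?_) hmε
    rw [ENNReal.le_div_iff_mul_le (Or.inl (by exact_mod_cast hm0))
      (Or.inl (ENNReal.natCast_ne_top _)), mul_comm]
    exact key n c y hc hd
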